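/- Let a > 0, β ∈ ℝ, λ ∈ ℂ with λ ∈ Σ_θ for θ ∈ (θ₀, π/2) where tan θ₀ ≥ |β|/√2. Define f(x) = 1/|λ + a + x|² for x ≥ 0. Then (β²|λ|²/2) · sup_{x ≥ 0} f(x) ≤ 1 + β²/2. Equivalently, for all x ≥ 0, β²|λ|² ≤ (2 + β²)|λ + a + x|². -/

import Mathlib

open Real

set_option maxHeartbeats 1000000 in
/-- For `a > 0`, `λ ∈ Σ_θ` with `θ ∈ (θ₀, π/2)` and `tan θ₀ ≥ |β|/√2`, one has
`β²|λ|² ≤ (2 + β²)|λ + a + x|²` for all `x ≥ 0`; equivalently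
`(β²|λ|²/2) sup_{x ≥ 0} 1/|λ+a+x|² ≤ 1 + β²/2`. -/
theorem stmt_8 (a β θ₀ θ : ℝ) (ha : 0 < a)
    (hθ₀ : 0 < θ₀) (htan : |β| / Real.sqrt 2 ≤ Real.tan θ₀)
    (hθ : θ ∈ Set.Ioo θ₀ (π / 2))
    (lam : ℂ) (hlam : lam ≠ 0 ∧ |lam.arg| < π - θ) :
    ∀ x : ℝ, 0 ≤ x →
      β ^ 2 * ‖lam‖ ^ 2 ≤ (2 + β ^ 2) * ‖lam + (a : ℂ) + (x : ℂ)‖ ^ 2 := by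
  obtain ⟨hlam0, harg⟩ := hlam
  obtain ⟨hθ₀θ, hθπ⟩ := hθ
  intro x hx
  have hθpos : 0 < θ := hθ₀.trans hθ₀θ
  have hπ : 0 < π := Real.pi_pos
  have hcos : 0 < Real.cos θ := Real.cos_pos_of_mem_Ioo ⟨by linarith, hθπ⟩
  have hsin : 0 < Real.sin θ := Real.sin_pos_of_pos_of_lt_pi hθpos (by linarith)
  -- tan monotone
  have htanθ : |β| / Real.sqrt 2 ≤ Real.tan θ := by
    refine htan.trans (le_of_lt ?_)
    exact Real.tan_lt_tan_of_nonneg_of_lt_pi_div_two hθ₀.le hθπ hθ₀θ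
  have hs2 : (0:ℝ) < Real.sqrt 2 := by positivity
  have hβ : |β| ≤ Real.sqrt 2 * Real.tan θ := by
    rw [div_le_iff₀ hs2] at htanθ; linarith [htanθ]
  have htaneq : Real.tan θ = Real.sin θ / Real.cos θ := Real.tan_eq_sin_div_cos θ
  have hβ2 : β ^ 2 * Real.cos θ ^ 2 ≤ 2 * Real.sin θ ^ 2 := by
    have h1 : |β| ^ 2 ≤ (Real.sqrt 2 * Real.tan θ) ^ 2 := by
      have htn : 0 ≤ Real.tan θ := by
        rw [htaneq]; positivity
      nlinarith [abs_nonneg β]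
    rw [sq_abs] at h1
    rw [htaneq] at h1
    have hc2 : (0:ℝ) < Real.cos θ ^ 2 := by positivity
    have h2 : Real.sqrt 2 ^ 2 = 2 := Real.sq_sqrt (by norm_num)
    calc β ^ 2 * Real.cos θ ^ 2 ≤ (Real.sqrt 2 * (Real.sin θ / Real.cos θ)) ^ 2 * Real.cos θ ^ 2 := by
          nlinarith
      _ = 2 * Real.sin θ ^ 2 := by
          field_simp
          nlinarith [Real.sq_sqrt (show (0:ℝ) ≤ 2 by norm_num)]
  have habs1 : ‖lam‖ ^ 2 = lam.re ^ 2 + lam.im ^ 2 := by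
    rw [Complex.sq_norm, Complex.normSq_apply]; ring
  have habs2 : ‖lam + (a : ℂ) + (x : ℂ)‖ ^ 2 = (lam.re + a + x) ^ 2 + lam.im ^ 2 := by
    rw [Complex.sq_norm, Complex.normSq_apply]
    simp [Complex.add_re, Complex.add_im]
    ring
  rw [habs1, habs2]
  by_cases hre : 0 ≤ lam.re
  · nlinarith [sq_nonneg β, sq_nonneg lam.im, sq_nonneg (lam.re + a + x), sq_nonneg (a + x),
      mul_nonneg (sq_nonneg β) (mul_nonneg hre (add_nonneg ha.le hx)),
      mul_nonneg (sq_nonneg β) (sq_nonneg (a + x))]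
  · push_neg at hre
    -- π/2 < |arg lam|
    have hargpi : |lam.arg| ≤ π := abs_le.mpr ⟨(Complex.neg_pi_lt_arg lam).le, Complex.arg_le_pi lam⟩
    have h12 : π / 2 < |lam.arg| := by
      by_contra h
      push_neg at h
      have := (Complex.abs_arg_le_pi_div_two_iff (z := lam)).mp h
      linarith
    -- sin θ < sin (π - |arg|)
    have hkey : Real.sin θ < Real.sin (π - |lam.arg|) := by
      apply Real.sin_lt_sin_of_lt_of_le_pi_div_two (by linarith) (by linarith)
      linarith
    rw [Real.sin_pi_sub] at hkey
    have habs_sin : |Real.sin lam.arg| = Real.sin |lam.arg| := by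
      rcases abs_cases lam.arg with ⟨h1, h2⟩ | ⟨h1, h2⟩
      · rw [h1, abs_of_nonneg (Real.sin_nonneg_of_nonneg_of_le_pi h2 (Complex.arg_le_pi lam))]
      · rw [h1, Real.sin_neg, abs_of_nonpos]
        exact Real.sin_nonpos_of_nonpos_of_neg_pi_le h2.le (by linarith [Complex.neg_pi_lt_arg lam])
    have him : ‖lam‖ * Real.sin θ ≤ |lam.im| := by
      have h := Complex.sin_arg lam
      have habsne : (0:ℝ) < ‖lam‖ := by
        simpa [norm_pos_iff] using hlam0
      have : |lam.im| = ‖lam‖ * |Real.sin lam.arg| := by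
        rw [h, abs_div, abs_of_pos habsne]
        field_simp
      rw [this, habs_sin]
      have := mul_le_mul_of_nonneg_left hkey.le habsne.le
      linarith
    have him2 : ‖lam‖ ^ 2 * Real.sin θ ^ 2 ≤ lam.im ^ 2 := by
      have h0 : 0 ≤ ‖lam‖ * Real.sin θ := by positivity
      have h1 : |lam.im| ^ 2 = lam.im ^ 2 := sq_abs lam.im
      nlinarith [him, abs_nonneg lam.im]
    rw [habs1] at him2
    have hpyth : Real.sin θ ^ 2 + Real.cos θ ^ 2 = 1 := Real.sin_sq_add_cos_sq θ
    have hkey2 : β ^ 2 ≤ (2 + β ^ 2) * Real.sin θ ^ 2 := by nlinarith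
    have h2β : (0:ℝ) ≤ 2 + β ^ 2 := by positivity
    have step1 : β ^ 2 * (lam.re ^ 2 + lam.im ^ 2) ≤
        (2 + β ^ 2) * Real.sin θ ^ 2 * (lam.re ^ 2 + lam.im ^ 2) :=
      mul_le_mul_of_nonneg_right hkey2 (by positivity)
    have step2 : (2 + β ^ 2) * ((lam.re ^ 2 + lam.im ^ 2) * Real.sin θ ^ 2) ≤
        (2 + β ^ 2) * lam.im ^ 2 := mul_le_mul_of_nonneg_left him2 h2β
    nlinarith [sq_nonneg (lam.re + a + x)]
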